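/- If an open subgroup H of a T1 paratopological group G has a suitable set, then G has a suitable set; moreover if H has a closed suitable set then G has a closed suitable set. -/

import Mathlib

def IsSuitable {G : Type*} [Group G] [TopologicalSpace G] (S : Set G) : Prop :=
  DiscreteTopology S ∧ IsClosed (S ∪ {1}) ∧ Dense (Subgroup.closure S : Set G)

lemma discrete_char {X : Type*} [TopologicalSpace X] (A : Set X) :
    DiscreteTopology A ↔ ∀ x ∈ A, ∃ U : Set X, IsOpen U ∧ U ∩ A = {x} := by
  constructor
  · intro h x hx
    have h1 : IsOpen ({⟨x, hx⟩} : Set A) := isOpen_discrete _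
    rw [isOpen_induced_iff] at h1
    obtain ⟨U, hU, hUe⟩ := h1
    refine ⟨U, hU, ?_⟩
    ext y
    simp only [Set.mem_inter_iff, Set.mem_singleton_iff]
    constructor
    · rintro ⟨hyU, hyA⟩
      have : (⟨y, hyA⟩ : A) ∈ (Subtype.val ⁻¹' U : Set A) := hyU
      rw [hUe] at this
      exact congrArg Subtype.val this
    · intro h
      have hyA : y ∈ A := h ▸ hx
      have : (⟨y, hyA⟩ : A) ∈ (Subtype.val ⁻¹' U : Set A) := by
        rw [hUe]; exact Subtype.ext h
      exact ⟨this, hyA⟩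
  · intro h
    rw [discreteTopology_iff_isOpen_singleton]
    rintro ⟨x, hx⟩
    obtain ⟨U, hU, hUA⟩ := h x hx
    rw [isOpen_induced_iff]
    refine ⟨U, hU, ?_⟩
    ext ⟨y, hy⟩
    simp only [Set.mem_preimage, Set.mem_singleton_iff, Subtype.ext_iff]
    constructor
    · intro hyU
      have : y ∈ U ∩ A := ⟨hyU, hy⟩
      rw [hUA] at this
      exact this
    · intro h
      have : y ∈ U ∩ A := by rw [hUA]; exact h
      exact this.1

section Aux
variable {G : Type*} [Group G] [TopologicalSpace G] [ContinuousMul G] [T1Space G]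

lemma open_subgroup_closed (H : Subgroup G) (hopen : IsOpen (H : Set G)) :
    IsClosed (H : Set G) := by
  rw [← isOpen_compl_iff, isOpen_iff_forall_mem_open]
  intro x hx
  refine ⟨{y | x⁻¹ * y ∈ H}, ?_, hopen.preimage (continuous_const.mul continuous_id), by simp [H.one_mem]⟩
  intro y hy hyH
  exact hx (by simpa [mul_assoc] using H.mul_mem hyH (H.inv_mem hy))

lemma suitable_lift (H : Subgroup G) (hopen : IsOpen (H : Set G)) (S : Set H)
    (hS : IsSuitable S) :
    ∃ T : Set G, IsSuitable T ∧ (IsClosed S → IsClosed T) := by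
  classical
  obtain ⟨hdisc, hcl, hdense⟩ := hS
  have hHcl : IsClosed (H : Set G) := open_subgroup_closed H hopen
  set S' : Set G := Subtype.val '' S with hS'def
  set R : Set G := Quotient.out '' {c : G ⧸ H | c ≠ QuotientGroup.mk 1} with hRdef
  set T : Set G := S' ∪ R with hTdef
  have hS'H : S' ⊆ (H : Set G) := by rintro _ ⟨s, _, rfl⟩; exact s.2
  have hmk1 : ∀ g : G, (QuotientGroup.mk g : G ⧸ H) = QuotientGroup.mk 1 ↔ g ∈ H := by
    intro g; rw [QuotientGroup.eq]; simp
  have hRnotH : ∀ r ∈ R, r ∉ H := by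
    rintro _ ⟨c, hc, rfl⟩ hmem
    exact hc (by rw [← QuotientGroup.out_eq' c]; exact (hmk1 _).2 hmem)
  have hcosetOpen : ∀ g : G, IsOpen {y | g⁻¹ * y ∈ H} :=
    fun g => hopen.preimage (continuous_const.mul continuous_id)
  have hcosetH : ∀ g y : G, g⁻¹ * y ∈ H → y ∈ H → g ∈ H := by
    intro g y h1 h2
    simpa [mul_assoc] using H.mul_mem h2 (H.inv_mem h1)
  -- closedness machine
  have key : ∀ B : Set G, B ⊆ (H : Set G) → IsClosed B → IsClosed (B ∪ R) := by
    intro B hBH hBcl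
    rw [← isOpen_compl_iff, isOpen_iff_forall_mem_open]
    intro x hx
    simp only [Set.mem_compl_iff, Set.mem_union, not_or] at hx
    obtain ⟨hxB, hxR⟩ := hx
    by_cases hxH : x ∈ H
    · refine ⟨Bᶜ ∩ H, ?_, hBcl.isOpen_compl.inter hopen, hxB, hxH⟩
      rintro y ⟨hy1, hy2⟩
      simp only [Set.mem_compl_iff, Set.mem_union, not_or]
      exact ⟨hy1, fun hyR => hRnotH y hyR hy2⟩
    · refine ⟨{y | x⁻¹ * y ∈ H} \ {(QuotientGroup.mk x : G ⧸ H).out}, ?_,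
        (hcosetOpen x).sdiff isClosed_singleton, ?_, ?_⟩
      · rintro y ⟨hy1, hy2⟩
        simp only [Set.mem_compl_iff, Set.mem_union, not_or]
        have hyH : y ∉ H := fun hyH => hxH (hcosetH x y hy1 hyH)
        refine ⟨fun hyB => hyH (hBH hyB), ?_⟩
        rintro ⟨c, hc, rfl⟩
        apply hy2
        have : (QuotientGroup.mk x : G ⧸ H) = QuotientGroup.mk c.out := QuotientGroup.eq.2 hy1
        rw [QuotientGroup.out_eq'] at this
        rw [← this]
        exact rfl
      · show x⁻¹ * x ∈ H
        simpa using H.one_mem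
      · simp only [Set.mem_singleton_iff]
        intro hxo
        exact hxR ⟨QuotientGroup.mk x, fun h => hxH ((hmk1 x).1 h), hxo.symm⟩
  -- image facts
  have hclmap : IsClosedMap (Subtype.val : H → G) := hHcl.isClosedEmbedding_subtypeVal.isClosedMap
  refine ⟨T, ⟨?_, ?_, ?_⟩, ?_⟩
  · -- discrete
    rw [discrete_char]
    intro t ht
    rcases ht with htS | htR
    · obtain ⟨s, hsS, rfl⟩ := htS
      obtain ⟨UH, hUH, hUHs⟩ := (discrete_char S).1 hdisc s hsS
      refine ⟨Subtype.val '' UH, hopen.isOpenMap_subtype_val _ hUH, ?_⟩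
      have h1 : Subtype.val '' UH ∩ S' = {(s : G)} := by
        rw [hS'def, ← Set.image_inter Subtype.val_injective, hUHs, Set.image_singleton]
      have h2 : Subtype.val '' UH ∩ R = ∅ := by
        rw [Set.eq_empty_iff_forall_notMem]
        rintro y ⟨⟨z, _, rfl⟩, hyR⟩
        exact hRnotH _ hyR z.2
      rw [hTdef, Set.inter_union_distrib_left, h1, h2, Set.union_empty]
    · obtain ⟨c, hc, rfl⟩ := htR
      refine ⟨{y | c.out⁻¹ * y ∈ H}, hcosetOpen _, ?_⟩
      ext y
      simp only [Set.mem_inter_iff, Set.mem_setOf_eq, Set.mem_singleton_iff]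
      constructor
      · rintro ⟨hmem, hyS | hyR⟩
        · exact absurd (hcosetH _ _ hmem (hS'H hyS)) (hRnotH _ ⟨c, hc, rfl⟩)
        · obtain ⟨c', hc', rfl⟩ := hyR
          have : (QuotientGroup.mk c.out : G ⧸ H) = QuotientGroup.mk c'.out :=
            QuotientGroup.eq.2 hmem
          rw [QuotientGroup.out_eq', QuotientGroup.out_eq'] at this
          rw [this]
      · rintro rfl
        exact ⟨by simpa using H.one_mem, Or.inr ⟨c, hc, rfl⟩⟩
  · -- T ∪ {1} closed
    have h1 : T ∪ {1} = (S' ∪ {1}) ∪ R := by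
      rw [hTdef, Set.union_right_comm]
    rw [h1]
    apply key
    · rintro y (hy | hy)
      · exact hS'H hy
      · simp only [Set.mem_singleton_iff] at hy; rw [hy]; exact H.one_mem
    · have : S' ∪ {1} = Subtype.val '' (S ∪ {1}) := by
        rw [Set.image_union, Set.image_singleton]
        rfl
      rw [this]
      exact hclmap _ hcl
  · -- dense
    have hHsub : (H : Set G) ⊆ closure (Subgroup.closure S' : Set G) := by
      intro x hx
      rw [mem_closure_iff]
      intro U hU hxU
      have hx' : (⟨x, hx⟩ : H) ∈ closure (Subgroup.closure S : Set H) := hdense _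
      rw [mem_closure_iff] at hx'
      obtain ⟨z, hz1, hz2⟩ := hx' (Subtype.val ⁻¹' U) (hU.preimage continuous_subtype_val) hxU
      refine ⟨z, hz1, ?_⟩
      have : (z : G) ∈ (Subgroup.closure S).map H.subtype := ⟨z, hz2, rfl⟩
      rwa [MonoidHom.map_closure] at this
    have hST : (Subgroup.closure S' : Set G) ⊆ (Subgroup.closure T : Set G) :=
      Subgroup.closure_mono Set.subset_union_left
    intro x
    by_cases hxH : x ∈ H
    · exact closure_mono hST (hHsub hxH)
    · set r : G := (QuotientGroup.mk x : G ⧸ H).out with hr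
      have hrR : r ∈ R := ⟨QuotientGroup.mk x, fun h => hxH ((hmk1 x).1 h), rfl⟩
      have hrx : r⁻¹ * x ∈ H := by
        rw [← QuotientGroup.eq, hr, QuotientGroup.out_eq']
      have h1 : x ∈ (r * ·) '' closure (Subgroup.closure S' : Set G) :=
        ⟨r⁻¹ * x, hHsub hrx, by group⟩
      have h2 : (r * ·) '' closure (Subgroup.closure S' : Set G) ⊆
          closure ((r * ·) '' (Subgroup.closure S' : Set G)) :=
        image_closure_subset_closure_image (continuous_const.mul continuous_id)
      refine closure_mono ?_ (h2 h1)
      rintro _ ⟨a, ha, rfl⟩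
      exact Subgroup.mul_mem _ (Subgroup.subset_closure (Or.inr hrR)) (hST ha)
  · -- closed case
    intro hScl
    apply key S' hS'H
    have : S' = Subtype.val '' S := hS'def
    rw [this]
    exact hclmap _ hScl
end Aux

theorem stmt10 {G : Type*} [Group G] [TopologicalSpace G] [ContinuousMul G] [T1Space G]
    (H : Subgroup G) (hopen : IsOpen (H : Set G)) :
    ((∃ S : Set H, IsSuitable S) → ∃ T : Set G, IsSuitable T) ∧
    ((∃ S : Set H, IsSuitable S ∧ IsClosed S) → ∃ T : Set G, IsSuitable T ∧ IsClosed T) := by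
  constructor
  · rintro ⟨S, hS⟩
    obtain ⟨T, hT, _⟩ := suitable_lift H hopen S hS
    exact ⟨T, hT⟩
  · rintro ⟨S, hS, hScl⟩
    obtain ⟨T, hT, hTcl⟩ := suitable_lift H hopen S hS
    exact ⟨T, hT, hTcl hScl⟩
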